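/- Let A and B be nonempty finite subsets of an abelian group G. Then |A + B| = |A| if and only if there exists a finite subgroup H of G such that B is contained in a coset of H and A is a union of cosets of H. -/
import Mathlib


open Pointwise

theorem exact_inverse_sumset {G : Type*} [AddCommGroup G] [DecidableEq G]
    (A B : Finset G) (hA : A.Nonempty) (hB : B.Nonempty) :
    (A + B).card = A.card ↔
      ∃ H : AddSubgroup G, (H : Set G).Finite ∧
        (∃ g : G, (B : Set G) ⊆ g +ᵥ (H : Set G)) ∧
        (A : Set G) + (H : Set G) = (A : Set G) := by
  constructor
  · intro hcard
    obtain ⟨b, hb⟩ := hB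
    obtain ⟨a, ha⟩ := hA
    have hbA : b +ᵥ A = A + B := by
      apply Finset.eq_of_subset_of_card_le
      · intro x hx
        rw [Finset.mem_vadd_finset] at hx
        obtain ⟨y, hy, rfl⟩ := hx
        rw [vadd_eq_add, add_comm b y]
        exact Finset.add_mem_add hy hb
      · rw [hcard, Finset.card_vadd_finset]
    have key : ∀ b' ∈ B, (-b + b') +ᵥ A = A := by
      intro b' hb'
      have h1 : b' +ᵥ A = b +ᵥ A := by
        apply Finset.eq_of_subset_of_card_le
        · intro x hx
          rw [Finset.mem_vadd_finset] at hx
          obtain ⟨y, hy, rfl⟩ := hx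
          rw [hbA, vadd_eq_add, add_comm b' y]
          exact Finset.add_mem_add hy hb'
        · rw [Finset.card_vadd_finset, Finset.card_vadd_finset]
      calc (-b + b') +ᵥ A = (-b) +ᵥ (b' +ᵥ A) := by rw [← vadd_vadd]
        _ = (-b) +ᵥ (b +ᵥ A) := by rw [h1]
        _ = A := by rw [vadd_vadd, neg_add_cancel, zero_vadd]
    refine ⟨AddAction.stabilizer G A, ?_, ⟨b, ?_⟩, ?_⟩
    · apply Set.Finite.subset (Set.Finite.image (fun x => -a + x) A.finite_toSet)
      intro h hh
      rw [SetLike.mem_coe, AddAction.mem_stabilizer_iff] at hh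
      refine ⟨a + h, ?_, neg_add_cancel_left a h⟩
      have : a + h ∈ h +ᵥ A := by
        rw [Finset.mem_vadd_finset]
        exact ⟨a, ha, by rw [vadd_eq_add, add_comm]⟩
      rw [hh] at this
      exact this
    · intro b' hb'
      rw [Set.mem_vadd_set]
      refine ⟨-b + b', ?_, add_neg_cancel_left b b'⟩
      rw [SetLike.mem_coe, AddAction.mem_stabilizer_iff]
      exact key b' hb'
    · ext x
      constructor
      · rintro ⟨a', ha', h, hh, rfl⟩
        rw [SetLike.mem_coe, AddAction.mem_stabilizer_iff] at hh
        have : a' + h ∈ h +ᵥ A := by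
          rw [Finset.mem_vadd_finset]
          exact ⟨a', ha', by rw [vadd_eq_add, add_comm]⟩
        rw [hh] at this
        exact_mod_cast this
      · intro hx
        exact ⟨x, hx, 0, by simp, by simp⟩
  · rintro ⟨H, hHfin, ⟨g, hBg⟩, hAH⟩
    obtain ⟨b, hb⟩ := hB
    apply le_antisymm
    · -- (A+B).card ≤ A.card
      have hsub : A + B ⊆ g +ᵥ A := by
        intro x hx
        rw [Finset.mem_add] at hx
        obtain ⟨a', ha', b', hb', rfl⟩ := hx
        obtain ⟨h, hh, rfl⟩ := hBg hb'
        rw [SetLike.mem_coe] at hh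
        have hah : a' + h ∈ (A : Set G) := by
          rw [← hAH]
          exact ⟨a', ha', h, hh, rfl⟩
        rw [Finset.mem_vadd_finset]
        exact ⟨a' + h, by exact_mod_cast hah, by simp only [vadd_eq_add]; abel⟩
      calc (A + B).card ≤ (g +ᵥ A).card := Finset.card_le_card hsub
        _ = A.card := Finset.card_vadd_finset g A
    · have hsub : b +ᵥ A ⊆ A + B := by
        intro x hx
        rw [Finset.mem_vadd_finset] at hx
        obtain ⟨y, hy, rfl⟩ := hx
        rw [vadd_eq_add, add_comm b y]
        exact Finset.add_mem_add hy hb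
      calc A.card = (b +ᵥ A).card := (Finset.card_vadd_finset b A).symm
        _ ≤ (A + B).card := Finset.card_le_card hsub
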